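/- Let (q_n) be an increasing sequence of positive integers with q_{m+2} ≥ 2 q_m for all m and q_{n+1} ≥ q_n. Suppose α is irrational with denominators (q_n) and α is not of Brjuno type, i.e. ∑_{n≥0} log(q_{n+1})/q_n = +∞. Then for any H > 1 there exists a subsequence (q_{n_j}) such that q_{n_{j+1}} ≥ H^{q_{n_j}} for all j, and an infinite set J ⊂ N such that for all j ∈ J, ‖q_{n_j} α‖ < exp(-q_{n_j}/j^2). -/

import Mathlib

open Finset

lemma aux_pow_half (q : ℕ → ℕ) (hq1 : ∀ n, 1 ≤ q n) (hdouble : ∀ n, 2 * q n ≤ q (n+2)) :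
    ∀ n, 2 ^ (n / 2) ≤ q n := by
  intro n
  induction n using Nat.strong_induction_on with
  | _ n ih =>
    match n with
    | 0 => simpa using hq1 0
    | 1 => simpa using hq1 1
    | (m+2) =>
      have h1 : 2 ^ (m / 2) ≤ q m := ih m (by omega)
      have h2 := hdouble m
      have : (m+2)/2 = m/2 + 1 := by omega
      rw [this, pow_succ]
      omega

lemma aux_double_iter (q : ℕ → ℕ) (hdouble : ∀ n, 2 * q n ≤ q (n+2)) :
    ∀ s m, 2 ^ s * q m ≤ q (m + 2*s) := by
  intro s
  induction s with
  | zero => simp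
  | succ s ih =>
    intro m
    have h1 := ih (m+2)
    have h2 := hdouble m
    have : m + 2*(s+1) = (m+2) + 2*s := by omega
    rw [this, pow_succ]
    calc 2^s * 2 * q m = 2^s * (2 * q m) := by ring
    _ ≤ 2^s * q (m+2) := by exact Nat.mul_le_mul_left _ h2
    _ ≤ q (m+2+2*s) := h1

lemma aux_sum_inv (q : ℕ → ℕ) (hq1 : ∀ n, 1 ≤ q n) (hmono : ∀ n, q n ≤ q (n+1))
    (hdouble : ∀ n, 2 * q n ≤ q (n+2)) :
    ∀ t m, ∑ n ∈ Ico m (m + t), ((q n : ℝ))⁻¹ ≤ 4 / q m := by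
  intro t
  induction t using Nat.strong_induction_on with
  | _ t ih =>
    intro m
    have hqm : (0:ℝ) < q m := by exact_mod_cast hq1 m
    match t with
    | 0 => simp; positivity
    | 1 =>
      have e : Ico m (m+1) = {m} := by ext x; simp [Finset.mem_Ico]
      rw [e, Finset.sum_singleton, inv_eq_one_div]
      gcongr
      norm_num
    | (u+2) =>
      have h1 : ∑ n ∈ Ico (m+2) (m + (u+2)), ((q n : ℝ))⁻¹ ≤ 4 / q (m+2) := by
        have := ih u (by omega) (m+2)
        have e : m + 2 + u = m + (u+2) := by omega
        rwa [e] at this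
      have hsplit : ∑ n ∈ Ico m (m+2), ((q n : ℝ))⁻¹ + ∑ n ∈ Ico (m+2) (m+(u+2)), ((q n : ℝ))⁻¹
          = ∑ n ∈ Ico m (m+(u+2)), ((q n : ℝ))⁻¹ :=
        Finset.sum_Ico_consecutive _ (by omega) (by omega)
      have e2 : Ico m (m+2) = {m, m+1} := by ext x; simp [Finset.mem_Ico]; omega
      have hpair : ∑ n ∈ Ico m (m+2), ((q n : ℝ))⁻¹ = ((q m : ℝ))⁻¹ + ((q (m+1) : ℝ))⁻¹ := by
        rw [e2, Finset.sum_pair (by omega)]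
      have hq1' : (0:ℝ) < q (m+1) := by exact_mod_cast hq1 (m+1)
      have hq2' : (0:ℝ) < q (m+2) := by exact_mod_cast hq1 (m+2)
      have hstep : ((q (m+1) : ℝ))⁻¹ ≤ ((q m : ℝ))⁻¹ := by
        apply inv_anti₀ hqm
        exact_mod_cast hmono m
      have hdd : (2:ℝ) * q m ≤ q (m+2) := by exact_mod_cast hdouble m
      have h4 : (4:ℝ) / q (m+2) ≤ 2 / q m := by
        rw [div_le_div_iff₀ hq2' hqm]
        nlinarith
      rw [← hsplit, hpair]
      have htwo : (2:ℝ) / q m = 1 / q m + 1 / q m := by ring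
      have this : ((q m : ℝ))⁻¹ + ((q (m+1) : ℝ))⁻¹ ≤ 2 / q m := by
        rw [inv_eq_one_div, inv_eq_one_div, htwo]
        have h1' := hstep
        rw [inv_eq_one_div, inv_eq_one_div] at h1'
        linarith
      calc _ ≤ 2 / (q m : ℝ) + 4 / (q (m+2) : ℝ) := by linarith
      _ ≤ 2 / q m + 2 / q m := by linarith
      _ = 4 / q m := by ring

lemma aux_tele_aux : ∀ T : ℕ, 1 ≤ T →
    ∑ i ∈ Ico 1 (T+1), ((i:ℝ) * Real.sqrt i)⁻¹ ≤ 3 - 2 / Real.sqrt T := by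
  intro T hT
  induction T, hT using Nat.le_induction with
  | base =>
    norm_num [Real.sqrt_one]
  | succ T hT ih =>
    have hsplit : ∑ i ∈ Ico 1 (T+2), ((i:ℝ) * Real.sqrt i)⁻¹
        = ∑ i ∈ Ico 1 (T+1), ((i:ℝ) * Real.sqrt i)⁻¹ + (((T+1:ℕ):ℝ) * Real.sqrt ((T+1:ℕ)))⁻¹ := by
      rw [Finset.sum_Ico_succ_top (by omega)]
    rw [hsplit]
    have hx0 : (0:ℝ) < Real.sqrt T := Real.sqrt_pos.mpr (by exact_mod_cast hT)
    have hy0 : (0:ℝ) < Real.sqrt (T+1) := Real.sqrt_pos.mpr (by positivity)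
    set x := Real.sqrt (T:ℝ) with hxdef
    set y := Real.sqrt ((T:ℝ)+1) with hydef
    have hx2 : x^2 = T := Real.sq_sqrt (by positivity)
    have hy2 : y^2 = (T:ℝ)+1 := Real.sq_sqrt (by positivity)
    have hxy : x ≤ y := Real.sqrt_le_sqrt (by linarith)
    have hcast : (((T+1:ℕ)):ℝ) = (T:ℝ)+1 := by push_cast; ring
    have hterm : (((T+1:ℕ):ℝ) * Real.sqrt ((T+1:ℕ)))⁻¹ ≤ 2 / x - 2 / y := by
      rw [hcast]
      have h2 : (y - x) * (x + y) = 1 := by nlinarith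
      have hkey : ((T:ℝ)+1) * y = y^2 * y := by rw [hy2]
      rw [hkey]
      have hrhs : 2 / x - 2 / y = 2 * (y - x) / (x * y) := by
        field_simp
      rw [hrhs, inv_eq_one_div, div_le_div_iff₀ (by positivity) (by positivity)]
      nlinarith [sq_nonneg (y - x), sq_nonneg x, mul_pos hx0 hy0]
    have hlast : ∑ i ∈ Ico 1 (T+1), ((i:ℝ) * Real.sqrt i)⁻¹ ≤ 3 - 2 / x := ih
    have : (3:ℝ) - 2/x + (2/x - 2/y) = 3 - 2/y := by ring
    push_cast at *
    linarith

lemma aux_tele : ∀ T : ℕ, ∑ i ∈ Ico 1 T, ((i:ℝ) * Real.sqrt i)⁻¹ ≤ 3 := by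
  intro T
  match T with
  | 0 => simp
  | 1 => simp
  | (T+2) =>
    have h := aux_tele_aux (T+1) (by omega)
    have hx0 : (0:ℝ) < Real.sqrt (T+1) := Real.sqrt_pos.mpr (by positivity)
    have : (0:ℝ) < 2 / Real.sqrt ((T:ℝ)+1) := by positivity
    push_cast at *
    linarith

theorem stmt_5 (α : ℝ) (hirr : Irrational α) (q : ℕ → ℕ)
    (hq1 : ∀ n, 1 ≤ q n) (hmono : ∀ n, q n ≤ q (n+1)) (hdouble : ∀ n, 2 * q n ≤ q (n+2))
    (happrox : ∀ n, |(q n : ℝ) * α - round ((q n : ℝ) * α)| ≤ 1 / (q (n+1) : ℝ))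
    (hnonBrjuno : ¬ Summable (fun n => Real.log (q (n+1)) / (q n : ℝ)))
    (H : ℝ) (hH : 1 < H) :
    ∃ nj : ℕ → ℕ, StrictMono nj ∧
      (∀ j, H ^ (q (nj j)) ≤ (q (nj (j+1)) : ℝ)) ∧
      ∃ J : Set ℕ, J.Infinite ∧ ∀ j ∈ J,
        |(q (nj j) : ℝ) * α - round ((q (nj j) : ℝ) * α)| <
          Real.exp (-(q (nj j) : ℝ) / (j : ℝ)^2) := by
  classical
  have hq2 : ∀ n, 2^(n/2) ≤ q n := aux_pow_half q hq1 hdouble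
  have hmono' : Monotone q := monotone_nat_of_le_succ hmono
  have hqpos : ∀ n, (0:ℝ) < q n := fun n => by exact_mod_cast hq1 n
  have hH0 : (0:ℝ) < H := lt_trans one_pos hH
  have hexists : ∀ a : ℕ, ∃ m, a < m ∧ H ^ (q a) ≤ (q m : ℝ) := by
    intro a
    obtain ⟨k, hk⟩ := exists_nat_ge (H ^ (q a))
    refine ⟨2*k + a + 1, by omega, ?_⟩
    have h2 : (2:ℕ)^k ≤ 2^((2*k+a+1)/2) := Nat.pow_le_pow_right (by norm_num) (by omega)
    have h3 := hq2 (2*k+a+1)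
    have h4 : k ≤ 2^k := (Nat.lt_two_pow_self (n := k)).le
    calc H ^ q a ≤ (k:ℝ) := hk
    _ ≤ ((q (2*k+a+1) : ℕ) : ℝ) := by exact_mod_cast le_trans h4 (le_trans h2 h3)
  set g : ℕ → ℕ := fun a => Nat.find (hexists a) with hgdef
  have hg_lt : ∀ a, a < g a := fun a => (Nat.find_spec (hexists a)).1
  have hg_step : ∀ a, H ^ (q a) ≤ (q (g a) : ℝ) := fun a => (Nat.find_spec (hexists a)).2
  have hg_min : ∀ a m, a < m → m < g a → (q m : ℝ) < H ^ (q a) := by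
    intro a m h1 h2
    have h3 := Nat.find_min (hexists a) h2
    push_neg at h3
    exact h3 h1
  set G : ℕ → ℕ := fun i => g^[i] 0 with hGdef
  have hGsucc : ∀ i, G (i+1) = g (G i) := fun i => Function.iterate_succ_apply' g i 0
  have hGlt : ∀ i, G i < G (i+1) := fun i => by rw [hGsucc]; exact hg_lt _
  have hGstep : ∀ i, H ^ (q (G i)) ≤ (q (G (i+1)) : ℝ) := fun i => by
    rw [hGsucc]; exact hg_step _
  have hGmin : ∀ i m, G i < m → m < G (i+1) → (q m : ℝ) < H ^ (q (G i)) := by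
    intro i m h1 h2
    rw [hGsucc] at h2
    exact hg_min _ _ h1 h2
  have hGmono : StrictMono G := strictMono_nat_of_lt_succ hGlt
  have hGge : ∀ i, i ≤ G i := fun i => hGmono.le_apply
  -- Main Lemma
  have ML : ∀ I : ℕ, ∃ i, I ≤ i ∧ ∃ n, G i ≤ n ∧ n < G (i+1) ∧
      4 * (q n : ℝ) < (i:ℝ)^2 * Real.log (q (n+1)) := by
    by_contra hML
    push_neg at hML
    obtain ⟨I, hI⟩ := hML
    apply hnonBrjuno
    have hterm_nonneg : ∀ n, 0 ≤ Real.log (q (n+1)) / (q n : ℝ) := by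
      intro n
      apply div_nonneg _ (hqpos n).le
      apply Real.log_nonneg
      exact_mod_cast hq1 (n+1)
    set KH := Nat.ceil H with hKHdef
    have hlogH_pos : (0:ℝ) < Real.log H := Real.log_pos hH
    have hlogH_le : Real.log H ≤ (2:ℝ)^KH := by
      have h1 : Real.log H ≤ H - 1 := Real.log_le_sub_one_of_pos hH0
      have h2 : H ≤ (KH:ℝ) := Nat.le_ceil H
      have h3 : (KH:ℝ) ≤ (2:ℝ)^KH := by exact_mod_cast (Nat.lt_two_pow_self (n := KH)).le
      linarith
    set i₀ := I + 1 with hi₀def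
    set C : ℝ := 44 + 8 * KH with hCdef
    have hC0 : (0:ℝ) ≤ C := by positivity
    have hblock : ∀ i, i₀ ≤ i →
        ∑ n ∈ Ico (G i) (G (i+1)), Real.log (q (n+1)) / (q n : ℝ)
          ≤ C * (((i:ℝ) * Real.sqrt i))⁻¹ := by
      intro i hi
      have hi1 : 1 ≤ i := by omega
      have hipos : (0:ℝ) < i := by exact_mod_cast hi1
      have hsq_pos : (0:ℝ) < Real.sqrt i := Real.sqrt_pos.mpr hipos
      set a := G i with hadef
      set b := G (i+1) with hbdef
      set s := Nat.sqrt i with hsdef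
      set E := 4*s + KH with hEdef
      set D := 2*E with hDdef
      have hab : a < b := hGlt i
      have hterm_small : ∀ n, a ≤ n → n < b →
          Real.log (q (n+1)) / (q n : ℝ) ≤ 4 / (i:ℝ)^2 := by
        intro n h1 h2
        have h3 := hI i (by omega) n h1 h2
        rw [div_le_div_iff₀ (hqpos n) (by positivity), mul_comm]
        exact h3
      have hi2pow : (i:ℝ)^2 * Real.log H ≤ (2:ℝ)^E := by
        have h1 : i < (s+1)^2 := by
          have := Nat.lt_succ_sqrt i
          simpa [pow_two] using this
        have h2 : i^2 ≤ ((s+1)^2)^2 := Nat.pow_le_pow_left h1.le 2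
        have h3 : s+1 ≤ 2^s := Nat.lt_two_pow_self (n := s)
        have h5 : ((s+1)^2)^2 ≤ ((2^s)^2)^2 := by
          apply Nat.pow_le_pow_left (Nat.pow_le_pow_left h3 2) 2
        have h6 : ((2^s : ℕ)^2)^2 = 2^(4*s) := by rw [← pow_mul, ← pow_mul]; ring_nf
        have h7 : i^2 ≤ 2^(4*s) := by
          calc i^2 ≤ ((s+1)^2)^2 := h2
          _ ≤ ((2^s)^2)^2 := h5
          _ = 2^(4*s) := h6
        have h8 : ((i:ℝ))^2 ≤ (2:ℝ)^(4*s) := by exact_mod_cast h7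
        have h9 : (2:ℝ)^E = (2:ℝ)^(4*s) * (2:ℝ)^KH := by rw [hEdef, pow_add]
        rw [h9]
        exact mul_le_mul h8 hlogH_le hlogH_pos.le (by positivity)
      -- both cases give this intermediate bound
      have hmain : ∑ n ∈ Ico a b, Real.log (q (n+1)) / (q n : ℝ) ≤ (4*(D:ℝ)+12) / (i:ℝ)^2 := by
        by_cases hcase : b ≤ a + D + 2
        · have h1 : ∑ n ∈ Ico a b, Real.log (q (n+1)) / (q n:ℝ)
              ≤ (Ico a b).card • (4/(i:ℝ)^2) := by
            apply Finset.sum_le_card_nsmul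
            intro n hn
            obtain ⟨hn1, hn2⟩ := Finset.mem_Ico.mp hn
            exact hterm_small n hn1 hn2
          rw [Nat.card_Ico, nsmul_eq_mul] at h1
          have h2 : ((b - a : ℕ):ℝ) ≤ ((D+2 : ℕ):ℝ) := by
            exact_mod_cast (by omega : b - a ≤ D+2)
          calc ∑ n ∈ Ico a b, Real.log (q (n+1)) / (q n:ℝ)
              ≤ ((b-a:ℕ):ℝ) * (4/(i:ℝ)^2) := h1
          _ ≤ ((D+2:ℕ):ℝ) * (4/(i:ℝ)^2) := by
              apply mul_le_mul_of_nonneg_right h2 (by positivity)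
          _ ≤ (4*(D:ℝ)+12) / (i:ℝ)^2 := by
              push_cast
              rw [show ((D:ℝ) + 2) * (4 / (i:ℝ)^2) = (4*(D:ℝ)+8)/(i:ℝ)^2 from by ring]
              gcongr
              linarith
        · push_neg at hcase
          have hs1 : ∑ n ∈ Ico a (a+D+1), Real.log (q (n+1)) / (q n:ℝ)
              + ∑ n ∈ Ico (a+D+1) b, Real.log (q (n+1)) / (q n:ℝ)
              = ∑ n ∈ Ico a b, Real.log (q (n+1)) / (q n:ℝ) :=
            Finset.sum_Ico_consecutive _ (by omega) (by omega)
          have hs2 : ∑ n ∈ Ico (a+D+1) (b-1), Real.log (q (n+1)) / (q n:ℝ)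
              + ∑ n ∈ Ico (b-1) b, Real.log (q (n+1)) / (q n:ℝ)
              = ∑ n ∈ Ico (a+D+1) b, Real.log (q (n+1)) / (q n:ℝ) :=
            Finset.sum_Ico_consecutive _ (by omega) (by omega)
          have hhead : ∑ n ∈ Ico a (a+D+1), Real.log (q (n+1)) / (q n:ℝ)
              ≤ ((D+1:ℕ):ℝ) * (4/(i:ℝ)^2) := by
            have h1 : ∑ n ∈ Ico a (a+D+1), Real.log (q (n+1)) / (q n:ℝ)
                ≤ (Ico a (a+D+1)).card • (4/(i:ℝ)^2) := by
              apply Finset.sum_le_card_nsmul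
              intro n hn
              obtain ⟨hn1, hn2⟩ := Finset.mem_Ico.mp hn
              exact hterm_small n hn1 (by omega)
            rw [Nat.card_Ico, nsmul_eq_mul] at h1
            have : a + D + 1 - a = D + 1 := by omega
            rwa [this] at h1
          have hlastset : Ico (b-1) b = {b-1} := by
            ext x; simp only [Finset.mem_Ico, Finset.mem_singleton]; omega
          have hlast : ∑ n ∈ Ico (b-1) b, Real.log (q (n+1)) / (q n:ℝ) ≤ 4/(i:ℝ)^2 := by
            rw [hlastset, Finset.sum_singleton]
            exact hterm_small (b-1) (by omega) (by omega)
          have hmid : ∀ n ∈ Ico (a+D+1) (b-1), Real.log (q (n+1)) / (q n:ℝ)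
              ≤ ((q a:ℝ) * Real.log H) * ((q n:ℝ))⁻¹ := by
            intro n hn
            obtain ⟨hn1, hn2⟩ := Finset.mem_Ico.mp hn
            have hqb : (q (b-1) : ℝ) < H ^ (q a) := hGmin i (b-1) (by omega) (by omega)
            have hq_le : (q (n+1) : ℝ) ≤ q (b-1) := by exact_mod_cast hmono' (by omega : n+1 ≤ b-1)
            have hlog : Real.log (q (n+1)) ≤ (q a : ℝ) * Real.log H := by
              have hlog1 : Real.log (q (n+1)) ≤ Real.log (H ^ (q a)) := by
                apply Real.log_le_log (hqpos (n+1))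
                linarith
              rwa [Real.log_pow] at hlog1
            rw [div_eq_mul_inv]
            exact mul_le_mul_of_nonneg_right hlog (by positivity)
          have hmids : ∑ n ∈ Ico (a+D+1) (b-1), Real.log (q (n+1)) / (q n:ℝ)
              ≤ ((q a:ℝ) * Real.log H) * ∑ n ∈ Ico (a+D+1) (b-1), ((q n:ℝ))⁻¹ := by
            rw [Finset.mul_sum]
            exact Finset.sum_le_sum hmid
          have hinv : ∑ n ∈ Ico (a+D+1) (b-1), ((q n:ℝ))⁻¹ ≤ 4 / q (a+D+1) := by
            have h1 := aux_sum_inv q hq1 hmono hdouble ((b-1) - (a+D+1)) (a+D+1)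
            rwa [show a+D+1 + ((b-1)-(a+D+1)) = b-1 from by omega] at h1
          have hqD : (2:ℝ)^E * (q a:ℝ) ≤ q (a+D+1) := by
            have h1 := aux_double_iter q hdouble E a
            have h2 : q (a + 2*E) ≤ q (a+D+1) := hmono' (by omega)
            exact_mod_cast le_trans h1 h2
          have hmid_tot : ∑ n ∈ Ico (a+D+1) (b-1), Real.log (q (n+1)) / (q n:ℝ)
              ≤ 4/(i:ℝ)^2 := by
            have h1 : ((q a:ℝ) * Real.log H) * ∑ n ∈ Ico (a+D+1) (b-1), ((q n:ℝ))⁻¹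
                ≤ ((q a:ℝ) * Real.log H) * (4 / q (a+D+1)) := by
              apply mul_le_mul_of_nonneg_left hinv
              positivity
            have h2 : ((q a:ℝ) * Real.log H) * (4 / q (a+D+1)) ≤ 4/(i:ℝ)^2 := by
              rw [show ((q a:ℝ) * Real.log H) * (4 / q (a+D+1))
                  = 4*((q a:ℝ) * Real.log H)/(q (a+D+1)) from by ring]
              rw [div_le_div_iff₀ (hqpos _) (by positivity)]
              have h3 : ((i:ℝ)^2 * Real.log H) * (q a:ℝ) ≤ (2:ℝ)^E * (q a:ℝ) :=
                mul_le_mul_of_nonneg_right hi2pow (hqpos a).le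
              nlinarith [hqpos a, hqpos (a+D+1)]
            calc _ ≤ _ := hmids
            _ ≤ _ := h1
            _ ≤ _ := h2
          calc ∑ n ∈ Ico a b, Real.log (q (n+1)) / (q n:ℝ)
              = ∑ n ∈ Ico a (a+D+1), Real.log (q (n+1)) / (q n:ℝ)
                + (∑ n ∈ Ico (a+D+1) (b-1), Real.log (q (n+1)) / (q n:ℝ)
                  + ∑ n ∈ Ico (b-1) b, Real.log (q (n+1)) / (q n:ℝ)) := by rw [hs2, hs1]
          _ ≤ ((D+1:ℕ):ℝ) * (4/(i:ℝ)^2) + (4/(i:ℝ)^2 + 4/(i:ℝ)^2) := by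
              have := add_le_add hmid_tot hlast
              exact add_le_add hhead this
          _ ≤ (4*(D:ℝ)+12) / (i:ℝ)^2 := by
              push_cast
              exact le_of_eq (by ring)
      -- final comparison
      have hs_le : (s:ℝ) ≤ Real.sqrt i := by
        rw [show (s:ℝ) = Real.sqrt ((s:ℝ)^2) from (Real.sqrt_sq (by positivity)).symm]
        apply Real.sqrt_le_sqrt
        exact_mod_cast Nat.sqrt_le' i
      have h1sq : (1:ℝ) ≤ Real.sqrt i := by
        rw [show (1:ℝ) = Real.sqrt 1 from by simp]
        exact Real.sqrt_le_sqrt (by exact_mod_cast hi1)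
      have hnum : 4*(D:ℝ)+12 ≤ C * Real.sqrt i := by
        have hDcast : (D:ℝ) = 8*(s:ℝ) + 2*(KH:ℝ) := by
          rw [hDdef, hEdef]; push_cast; ring
        rw [hDcast, hCdef]
        have hKH0 : (0:ℝ) ≤ KH := Nat.cast_nonneg KH
        nlinarith
      have hss : Real.sqrt (i:ℝ) * Real.sqrt (i:ℝ) = (i:ℝ) := Real.mul_self_sqrt hipos.le
      have hfinal : (4*(D:ℝ)+12)/(i:ℝ)^2 ≤ C * ((i:ℝ)*Real.sqrt i)⁻¹ := by
        rw [← div_eq_mul_inv, div_le_div_iff₀ (by positivity) (by positivity)]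
        calc (4*(D:ℝ)+12) * ((i:ℝ)*Real.sqrt i)
            ≤ (C * Real.sqrt i) * ((i:ℝ)*Real.sqrt i) :=
              mul_le_mul_of_nonneg_right hnum (by positivity)
        _ = C * (i:ℝ)^2 := by
            rw [show (C * Real.sqrt (i:ℝ)) * ((i:ℝ)*Real.sqrt (i:ℝ))
                = C * (i:ℝ) * (Real.sqrt (i:ℝ) * Real.sqrt (i:ℝ)) from by ring, hss]
            ring
      exact le_trans hmain hfinal
    set A : ℝ := ∑ n ∈ range (G i₀), Real.log (q (n+1)) / (q n : ℝ) with hAdef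
    have hdecomp : ∀ T, i₀ ≤ T → ∑ n ∈ range (G T), Real.log (q (n+1)) / (q n : ℝ)
        = A + ∑ i ∈ Ico i₀ T, (∑ n ∈ Ico (G i) (G (i+1)), Real.log (q (n+1)) / (q n : ℝ)) := by
      intro T hT
      induction T, hT using Nat.le_induction with
      | base => simp [hAdef]
      | succ T hT ih =>
        have h1 : ∑ n ∈ Ico 0 (G T), Real.log (q (n+1)) / (q n : ℝ)
            + ∑ n ∈ Ico (G T) (G (T+1)), Real.log (q (n+1)) / (q n : ℝ)
            = ∑ n ∈ Ico 0 (G (T+1)), Real.log (q (n+1)) / (q n : ℝ) :=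
          Finset.sum_Ico_consecutive _ (Nat.zero_le _) (hGlt T).le
        rw [Finset.range_eq_Ico, ← h1, ← Finset.range_eq_Ico, ih,
          Finset.sum_Ico_succ_top hT]
        ring
    have hbound : ∀ M, ∑ n ∈ range M, Real.log (q (n+1)) / (q n : ℝ) ≤ A + C * 3 := by
      intro M
      set T := M + i₀ with hTdef
      have hMT : M ≤ G T := le_trans (by omega) (hGge T)
      have h1 : ∑ n ∈ range M, Real.log (q (n+1)) / (q n : ℝ)
          ≤ ∑ n ∈ range (G T), Real.log (q (n+1)) / (q n : ℝ) :=
        Finset.sum_le_sum_of_subset_of_nonneg (Finset.range_subset_range.mpr hMT)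
          (fun n _ _ => hterm_nonneg n)
      have h2 : ∑ i ∈ Ico i₀ T, (∑ n ∈ Ico (G i) (G (i+1)), Real.log (q (n+1)) / (q n : ℝ))
          ≤ ∑ i ∈ Ico i₀ T, C * (((i:ℝ) * Real.sqrt i))⁻¹ := by
        apply Finset.sum_le_sum
        intro i hi
        exact hblock i (Finset.mem_Ico.mp hi).1
      have h3 : ∑ i ∈ Ico i₀ T, C * (((i:ℝ) * Real.sqrt i))⁻¹
          ≤ C * ∑ i ∈ Ico 1 T, (((i:ℝ) * Real.sqrt i))⁻¹ := by
        rw [← Finset.mul_sum]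
        apply mul_le_mul_of_nonneg_left _ hC0
        apply Finset.sum_le_sum_of_subset_of_nonneg
        · apply Finset.Ico_subset_Ico (by omega) le_rfl
        · intro i _ _
          positivity
      have h4 := aux_tele T
      have h5 := mul_le_mul_of_nonneg_left h4 hC0
      rw [hdecomp T (by omega)] at h1
      linarith
    exact summable_of_sum_range_le hterm_nonneg hbound
  -- choose targets
  choose fI hfI fn hfn1 hfn2 hfn3 using ML
  set Ith : ℕ → ℕ := fun k =>
    Nat.rec (motive := fun _ => ℕ) 1 (fun k ih => max (fI ih + 3) (2*(k+1))) k with hIthdef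
  have hIthsucc : ∀ k, Ith (k+1) = max (fI (Ith k) + 3) (2*(k+1)) := fun k => rfl
  set ik : ℕ → ℕ := fun k => fI (Ith k) with hikdef
  set nk : ℕ → ℕ := fun k => fn (Ith k) with hnkdef
  have hik_ge : ∀ k, Ith k ≤ ik k := fun k => hfI (Ith k)
  have hik2k : ∀ k, 2*k ≤ ik k := by
    intro k
    match k with
    | 0 => omega
    | (k+1) =>
      have h1 := hik_ge (k+1)
      have h2 : 2*(k+1) ≤ Ith (k+1) := by rw [hIthsucc]; omega
      omega
  have hik1 : ∀ k, 1 ≤ ik k := by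
    intro k
    match k with
    | 0 =>
      have h1 := hik_ge 0
      have : Ith 0 = 1 := rfl
      omega
    | (k+1) =>
      have := hik2k (k+1); omega
  have hik_gap : ∀ k, ik k + 3 ≤ ik (k+1) := by
    intro k
    have h1 := hik_ge (k+1)
    have h0 : ik k = fI (Ith k) := rfl
    have h2 : ik k + 3 ≤ Ith (k+1) := by rw [hIthsucc]; omega
    omega
  set pos : ℕ → ℕ := fun k => ik k - k with hposdef
  have hpos_lt : ∀ k, pos k + 2 ≤ pos (k+1) := by
    intro k
    have h1 := hik_gap k
    have h2 := hik2k k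
    have h3 := hik2k (k+1)
    simp only [hposdef]
    omega
  have hposmono : StrictMono pos :=
    strictMono_nat_of_lt_succ (fun k => by have := hpos_lt k; omega)
  have hpos_gek : ∀ k, k ≤ pos k := by
    intro k
    have := hik2k k
    simp only [hposdef]
    omega
  have hpos1 : ∀ k, 1 ≤ pos k := by
    intro k
    match k with
    | 0 =>
      have := hik1 0
      simp only [hposdef]
      omega
    | (k+1) => have := hpos_gek (k+1); omega
  set κ : ℕ → ℕ := fun j => ((range j).filter (fun k => pos k < j)).card with hκdef
  set c : ℕ → ℕ := fun j =>
    if h : ∃ k, pos k = j then nk (Classical.choose h) else G (j + κ j) with hcdef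
  have hc_target : ∀ k, c (pos k) = nk k := by
    intro k
    have h : ∃ k', pos k' = pos k := ⟨k, rfl⟩
    simp only [hcdef]
    rw [dif_pos h]
    exact congrArg nk (hposmono.injective (Classical.choose_spec h))
  have hc_nontarget : ∀ j, (∀ k, pos k ≠ j) → c j = G (j + κ j) := by
    intro j hj
    simp only [hcdef]
    rw [dif_neg (by push_neg; exact fun k => hj k)]
  have hκ_below : ∀ j, j ≤ pos 0 → κ j = 0 := by
    intro j hj
    simp only [hκdef]
    rw [Finset.card_eq_zero, Finset.filter_eq_empty_iff]
    intro k _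
    have h1 : pos 0 ≤ pos k := hposmono.monotone (Nat.zero_le k)
    omega
  have hκ_mid : ∀ k j, pos k < j → j ≤ pos (k+1) → κ j = k + 1 := by
    intro k j h1 h2
    simp only [hκdef]
    have he : (range j).filter (fun m => pos m < j) = range (k+1) := by
      ext m
      simp only [Finset.mem_filter, Finset.mem_range]
      constructor
      · rintro ⟨hm1, hm2⟩
        by_contra hc'
        push_neg at hc'
        have h3 : pos (k+1) ≤ pos m := hposmono.monotone hc'
        omega
      · intro hm
        have h3 : pos m ≤ pos k := hposmono.monotone (by omega)
        have h4 := hpos_gek m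
        omega
    rw [he, Finset.card_range]
  have hbracket : ∀ j, pos 0 ≤ j → ∃ k, pos k ≤ j ∧ j < pos (k+1) := by
    intro j hj
    have hex : ∃ k, j < pos k := ⟨j+1, by have := hpos_gek (j+1); omega⟩
    set k0 := Nat.find hex with hk0def
    have hk0 : j < pos k0 := Nat.find_spec hex
    have hk0pos : 1 ≤ k0 := by
      rcases Nat.eq_zero_or_pos k0 with h | h
      · rw [h] at hk0; omega
      · exact h
    refine ⟨k0 - 1, ?_, ?_⟩
    · have := Nat.find_min hex (show k0 - 1 < k0 by omega)
      omega
    · have : k0 - 1 + 1 = k0 := by omega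
      rw [this]
      exact hk0
  have hstep_all : ∀ j, c j < c (j+1) ∧ H ^ (q (c j)) ≤ (q (c (j+1)) : ℝ) := by
    intro j
    by_cases hA : ∃ k, pos k = j
    · obtain ⟨k, hk⟩ := hA
      have h1 : c j = nk k := by rw [← hk]; exact hc_target k
      have hnot : ∀ k', pos k' ≠ j+1 := by
        intro k' hk'
        rcases le_or_gt k' k with h | h
        · have := hposmono.monotone h; omega
        · have h2 : pos (k+1) ≤ pos k' := hposmono.monotone h
          have := hpos_lt k
          omega
      have hκ1 : κ (j+1) = k+1 := by
        apply hκ_mid k (j+1) (by omega)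
        have := hpos_lt k; omega
      have h2 : c (j+1) = G (ik k + 2) := by
        rw [hc_nontarget (j+1) hnot, hκ1]
        congr 1
        have h3 := hik2k k
        have h4 : pos k = ik k - k := rfl
        omega
      have h5 : nk k < G (ik k + 1) := hfn2 (Ith k)
      have h6 : G (ik k + 1) ≤ G (ik k + 2) := (hGmono (by omega)).le
      constructor
      · rw [h1, h2]; omega
      · rw [h1, h2]
        have ha : q (nk k) ≤ q (G (ik k + 1)) := hmono' h5.le
        have hb : H ^ (q (nk k)) ≤ H ^ (q (G (ik k + 1))) :=
          pow_le_pow_right₀ hH.le ha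
        exact le_trans hb (hGstep (ik k + 1))
    · push_neg at hA
      have hcj : c j = G (j + κ j) := hc_nontarget j hA
      by_cases hB : ∃ k, pos k = j+1
      · obtain ⟨k, hk⟩ := hB
        have hcj1 : c (j+1) = nk k := by rw [← hk]; exact hc_target k
        have hκj : κ j = k := by
          obtain rfl | ⟨m, rfl⟩ : k = 0 ∨ ∃ m, k = m + 1 := by
            rcases k with _ | m
            · exact Or.inl rfl
            · exact Or.inr ⟨m, rfl⟩
          · exact hκ_below j (by omega)
          · apply hκ_mid m j ?_ (by omega)
            have := hpos_lt m
            omega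
        have hidx : j + κ j = ik k - 1 := by
          rw [hκj]
          have h3 := hik2k k
          have h4 := hik1 k
          have h5 : pos k = ik k - k := rfl
          omega
        have hidx2 : (ik k - 1) + 1 = ik k := by have := hik1 k; omega
        have h5 : G (ik k) ≤ nk k := hfn1 (Ith k)
        constructor
        · rw [hcj, hcj1, hidx]
          have : G (ik k - 1) < G (ik k) := hGmono (by omega)
          omega
        · rw [hcj, hcj1, hidx]
          have hb := hGstep (ik k - 1)
          rw [hidx2] at hb
          have hc' : (q (G (ik k)) : ℝ) ≤ q (nk k) := by exact_mod_cast hmono' h5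
          linarith
      · push_neg at hB
        have hcj1 : c (j+1) = G (j+1 + κ (j+1)) := hc_nontarget (j+1) hB
        by_cases hC : pos 0 ≤ j
        · obtain ⟨k, hk1, hk2⟩ := hbracket j hC
          have hk1' : pos k < j := lt_of_le_of_ne hk1 (hA k)
          have hκj : κ j = k+1 := hκ_mid k j hk1' (by omega)
          have hκj1 : κ (j+1) = k+1 := hκ_mid k (j+1) (by omega) (by omega)
          rw [hcj, hcj1, hκj, hκj1]
          constructor
          · exact hGmono (by omega)
          · have := hGstep (j + (k+1))
            have he : j + 1 + (k+1) = (j + (k+1)) + 1 := by omega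
            rw [he]
            exact this
        · push_neg at hC
          have hκj : κ j = 0 := hκ_below j (by omega)
          have hκj1 : κ (j+1) = 0 := hκ_below (j+1) (by omega)
          rw [hcj, hcj1, hκj, hκj1]
          constructor
          · exact hGmono (by omega)
          · have := hGstep (j + 0)
            have he : j + 1 + 0 = (j + 0) + 1 := by omega
            rw [he]
            exact this
  refine ⟨c, strictMono_nat_of_lt_succ (fun j => (hstep_all j).1),
    fun j => (hstep_all j).2, Set.range pos,
    Set.infinite_range_of_injective hposmono.injective, ?_⟩
  rintro j ⟨k, hk⟩
  rw [← hk, hc_target k]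
  set n := nk k with hndef
  have hposk1 : 1 ≤ pos k := hpos1 k
  have hposkr : (0:ℝ) < (pos k : ℝ) := by exact_mod_cast hposk1
  have hik2 : (ik k : ℝ) ≤ 2 * (pos k : ℝ) := by
    have h1 := hik2k k
    have h2 : pos k = ik k - k := rfl
    have h3 : ik k ≤ 2 * pos k := by omega
    exact_mod_cast h3
  have hml := hfn3 (Ith k)
  have hlogpos : 0 < Real.log (q (n+1)) := by
    have h1 : (0:ℝ) < 4 * q n := by have := hqpos n; linarith
    have h2 : (0:ℝ) < (ik k:ℝ)^2 * Real.log (q (n+1)) := lt_trans h1 hml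
    have h3 : (0:ℝ) < (ik k:ℝ)^2 := by
      have h5 := hik1 k
      have h6 : (0:ℝ) < (ik k:ℝ) := by exact_mod_cast h5
      positivity
    by_contra hcon
    push_neg at hcon
    have h7 : (ik k:ℝ)^2 * Real.log (q (n+1)) ≤ 0 :=
      mul_nonpos_of_nonneg_of_nonpos h3.le hcon
    linarith
  have key : (q n : ℝ) < (pos k:ℝ)^2 * Real.log (q (n+1)) := by
    have h1 : (ik k:ℝ)^2 ≤ (2*(pos k:ℝ))^2 := by
      exact pow_le_pow_left₀ (Nat.cast_nonneg _) hik2 2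
    have h2 : (ik k:ℝ)^2 * Real.log (q (n+1)) ≤ (2*(pos k:ℝ))^2 * Real.log (q (n+1)) :=
      mul_le_mul_of_nonneg_right h1 hlogpos.le
    have h3 : (2*(pos k:ℝ))^2 * Real.log (q (n+1)) = 4*((pos k:ℝ)^2 * Real.log (q (n+1))) := by
      ring
    have h4 : (q n : ℝ) ≥ 0 := (hqpos n).le
    linarith
  have h2 : (q n:ℝ) / (pos k:ℝ)^2 < Real.log (q (n+1)) := by
    rw [div_lt_iff₀ (by positivity), mul_comm]
    exact key
  have h3 : 1 / (q (n+1):ℝ) < Real.exp (-(q n:ℝ)/(pos k:ℝ)^2) := by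
    have he : (1:ℝ)/(q (n+1):ℝ) = Real.exp (- Real.log (q (n+1))) := by
      rw [Real.exp_neg, Real.exp_log (hqpos (n+1)), one_div]
    rw [he]
    apply Real.exp_lt_exp.mpr
    rw [neg_div]
    linarith
  exact lt_of_le_of_lt (happrox n) h3
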